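/- Assume x̄ ≠ 0 and ε̃ ≥ 0, and set β = √(1 + ε̃/(3‖x̄‖²)). Then g(x) ≥ g(β·x̄) for every x ∈ ℝⁿ, with equality if and only if x = β·x̄ or x = −β·x̄; i.e. the set of global minimizers of g is exactly {β·x̄, −β·x̄}. -/
import Mathlib


open scoped RealInnerProductSpace BigOperators

set_option maxHeartbeats 1000000

/-- The expectation `g` of the noisy phase-retrieval objective (up to an additive constant). -/
noncomputable def gObj (n : ℕ) (xbar : EuclideanSpace ℝ (Fin n)) (εt : ℝ)
    (x : EuclideanSpace ℝ (Fin n)) : ℝ :=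
  (3 / 4) * (‖x‖ ^ 4 + ‖xbar‖ ^ 4) - (1 / 2) * ‖xbar‖ ^ 2 * ‖x‖ ^ 2 - ⟪xbar, x⟫ ^ 2
    - (εt / 2) * (‖x‖ ^ 2 - ‖xbar‖ ^ 2)

/-- The gradient of `g`. -/
noncomputable def gGrad (n : ℕ) (xbar : EuclideanSpace ℝ (Fin n)) (εt : ℝ)
    (x : EuclideanSpace ℝ (Fin n)) : EuclideanSpace ℝ (Fin n) :=
  (3 * ‖x‖ ^ 2) • x - (2 * ⟪xbar, x⟫) • xbar - (‖xbar‖ ^ 2 + εt) • x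

/-- the set of global minimizers of `g` is exactly `{β·x̄, −β·x̄}`. -/
theorem stmt9 (n : ℕ) (xbar : EuclideanSpace ℝ (Fin n)) (hxbar : xbar ≠ 0)
    (εt : ℝ) (hεt : 0 ≤ εt) (β : ℝ) (hβ : β = Real.sqrt (1 + εt / (3 * ‖xbar‖ ^ 2))) :
    ∀ x : EuclideanSpace ℝ (Fin n),
      gObj n xbar εt (β • xbar) ≤ gObj n xbar εt x ∧
        (gObj n xbar εt x = gObj n xbar εt (β • xbar) ↔
          x = β • xbar ∨ x = -(β • xbar)) := by
  intro x
  set a : ℝ := ‖xbar‖ ^ 2 with ha_def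
  have ha : 0 < a := by
    have := norm_pos_iff.2 hxbar
    positivity
  have hβ2 : β ^ 2 = 1 + εt / (3 * a) := by
    rw [hβ, Real.sq_sqrt]
    positivity
  have hε : εt = 3 * a * (β ^ 2 - 1) := by
    field_simp at hβ2 ⊢
    linarith
  have hβpos : 0 < β := by
    rw [hβ]; apply Real.sqrt_pos.2; positivity
  set t : ℝ := ‖x‖ ^ 2 with ht_def
  set s : ℝ := ⟪xbar, x⟫ with hs_def
  have ht0 : 0 ≤ t := by positivity
  have hnormb : ‖β • xbar‖ = β * ‖xbar‖ := by
    simp [norm_smul, abs_of_pos hβpos]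
  have hinnerb : ⟪xbar, (β • xbar : EuclideanSpace ℝ (Fin n))⟫ = β * a := by
    rw [real_inner_smul_right, real_inner_self_eq_norm_sq]
  -- Cauchy-Schwarz: s^2 ≤ a * t
  have hcs : s ^ 2 ≤ a * t := by
    have h := abs_real_inner_le_norm xbar x
    have h2 : s ^ 2 ≤ (‖xbar‖ * ‖x‖) ^ 2 := by
      rw [← sq_abs s]
      exact pow_le_pow_left₀ (abs_nonneg _) h 2
    calc s ^ 2 ≤ (‖xbar‖ * ‖x‖) ^ 2 := h2
      _ = a * t := by rw [ha_def, ht_def]; ring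
  -- key identity
  have hkey : gObj n xbar εt x - gObj n xbar εt (β • xbar)
      = (3 / 4) * (t - β ^ 2 * a) ^ 2 + (a * t - s ^ 2) := by
    simp only [gObj, hinnerb]
    rw [hnormb]
    rw [← ht_def, ← hs_def, ← ha_def, hε]
    have : (β * ‖xbar‖) ^ 2 = β ^ 2 * a := by rw [ha_def]; ring
    have h4 : (β * ‖xbar‖) ^ 4 = (β ^ 2 * a) ^ 2 := by rw [ha_def]; ring
    have ht4 : ‖x‖ ^ 4 = t ^ 2 := by rw [ht_def]; ring
    have hb4 : ‖xbar‖ ^ 4 = a ^ 2 := by rw [ha_def]; ring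
    rw [this, h4, ht4, hb4]
    ring
  constructor
  · nlinarith [sq_nonneg (t - β ^ 2 * a)]
  · constructor
    · intro heq
      have hsum : (3 / 4) * (t - β ^ 2 * a) ^ 2 + (a * t - s ^ 2) = 0 := by
        rw [← hkey, heq]; ring
      have h1 : t = β ^ 2 * a := by nlinarith [sq_nonneg (t - β ^ 2 * a)]
      have h2 : s ^ 2 = a * t := by nlinarith [sq_nonneg (t - β ^ 2 * a)]
      have hx0 : x ≠ 0 := by
        intro h0
        have ht' : t = 0 := by rw [ht_def, h0]; simp
        linarith [mul_pos (pow_pos hβpos 2) ha]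
      -- equality in Cauchy-Schwarz
      have habs : ‖⟪xbar, x⟫‖ = ‖xbar‖ * ‖x‖ := by
        rw [Real.norm_eq_abs, ← hs_def]
        have hsq : |s| ^ 2 = (‖xbar‖ * ‖x‖) ^ 2 := by
          rw [sq_abs, h2, ha_def, ht_def]; ring
        have hle : |s| ≤ ‖xbar‖ * ‖x‖ := abs_real_inner_le_norm xbar x
        nlinarith [abs_nonneg s, mul_nonneg (norm_nonneg xbar) (norm_nonneg x)]
      obtain ⟨r, hr0, hr⟩ := (norm_inner_eq_norm_iff hxbar hx0).1 habs
      have hr2 : r ^ 2 * a = β ^ 2 * a := by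
        have : t = r ^ 2 * a := by
          rw [ht_def, hr, norm_smul, Real.norm_eq_abs, ha_def, mul_pow, sq_abs]
        linarith
      have hr2' : (r - β) * (r + β) = 0 := by
        have := mul_right_cancel₀ (ne_of_gt ha) hr2
        nlinarith
      rcases mul_eq_zero.1 hr2' with h | h
      · left; rw [hr]; congr 1; linarith
      · right; rw [hr, ← neg_smul]; congr 1; linarith
    · rintro (rfl | rfl)
      · rfl
      · simp only [gObj]
        rw [norm_neg]
        congr 1
        rw [inner_neg_right]
        ring
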